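/- Let K ≥ 1, P > 0, h_1 ≥ h_2 ≥ ... ≥ h_K > 0 and θ_k ≥ 0 for k = 1,...,K. Then sup { Σ_{k=1}^K θ_k · log((1 + h_k Σ_{j=1}^k p_j)/(1 + h_k Σ_{j=1}^{k−1} p_j)) : p ∈ ℝ^K, p_k ≥ 0, Σ_{k=1}^K p_k ≤ P } = ∫_0^P max_{1 ≤ k ≤ K} θ_k/(1/h_k + z) dz. -/

import Mathlib

private lemma aux_int (θ c a b : ℝ) (hc : 0 < c) (ha : 0 ≤ a) (hab : a ≤ b) :
    ∫ z in a..b, θ / (c + z) = θ * Real.log ((c + b) / (c + a)) := by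
  have h0 : (0:ℝ) ∉ Set.uIcc (a + c) (b + c) := by
    rw [Set.uIcc_of_le (by linarith)]
    intro hmem
    have := hmem.1; linarith
  have h1 : ∫ z in a..b, θ / (c + z) = θ * ∫ z in a..b, (z + c)⁻¹ := by
    rw [← intervalIntegral.integral_const_mul]
    apply intervalIntegral.integral_congr
    intro x _
    simp [div_eq_mul_inv, add_comm]
  rw [h1, intervalIntegral.integral_comp_add_right (fun x => x⁻¹) c,
    integral_inv h0]
  congr 1
  rw [add_comm c b, add_comm c a]

private lemma aux_cross (θi θj ci cj w z : ℝ) (hθi : 0 ≤ θi) (hci : 0 < ci)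
    (hcj : 0 < cj) (hcij : ci ≤ cj) (hw : 0 ≤ w) (hwz : w ≤ z)
    (hlt : θi / (ci + w) < θj / (cj + w)) : θi / (ci + z) < θj / (cj + z) := by
  have hciw : 0 < ci + w := by linarith
  have hcjw : 0 < cj + w := by linarith
  have hciz : 0 < ci + z := by linarith
  have hcjz : 0 < cj + z := by linarith
  rw [div_lt_div_iff₀ hciw hcjw] at hlt
  rw [div_lt_div_iff₀ hciz hcjz]
  have hθj : 0 < θj := by nlinarith
  have hθij : θi < θj := by nlinarith
  nlinarith [mul_nonneg (sub_nonneg.2 hwz) (sub_nonneg.2 hθij.le)]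

private lemma aux_range_ite {K m : ℕ} (hm : m ≤ K) (g : ℕ → ℝ) :
    ∑ j ∈ Finset.range K, (if j < m then g j else 0) = ∑ j ∈ Finset.range m, g j := by
  rw [← Finset.sum_subset (Finset.range_subset_range.2 hm)]
  · exact Finset.sum_congr rfl fun j hj => if_pos (Finset.mem_range.1 hj)
  · intro j _ hj
    exact if_neg (by simpa using hj)

private lemma aux_filter_le {K : ℕ} (k : Fin K) (g : Fin K → ℝ) (g' : ℕ → ℝ)
    (hg : ∀ j : Fin K, g j = g' j.1) :
    ∑ j ∈ Finset.univ.filter (· ≤ k), g j = ∑ j ∈ Finset.range (k.1+1), g' j := by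
  calc ∑ j ∈ Finset.univ.filter (· ≤ k), g j
      = ∑ j ∈ Finset.univ.filter (· ≤ k), g' j.1 :=
        Finset.sum_congr rfl fun j _ => hg j
    _ = ∑ a : Fin K, (if a ≤ k then g' a.1 else 0) := Finset.sum_filter _ _
    _ = ∑ j ∈ Finset.range K, (if j < k.1+1 then g' j else 0) := by
        rw [← Fin.sum_univ_eq_sum_range (fun j => if j < k.1+1 then g' j else 0) K]
        refine Finset.sum_congr rfl fun a _ => ?_
        by_cases hak : a ≤ k
        · rw [if_pos hak]
          exact (if_pos (Nat.lt_succ_of_le hak)).symm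
        · rw [if_neg hak]
          exact (if_neg (fun hc => hak (Fin.le_def.2 (Nat.lt_succ_iff.1 hc)))).symm
    _ = ∑ j ∈ Finset.range (k.1+1), g' j := aux_range_ite k.2 g'

private lemma aux_filter_lt {K : ℕ} (k : Fin K) (g : Fin K → ℝ) (g' : ℕ → ℝ)
    (hg : ∀ j : Fin K, g j = g' j.1) :
    ∑ j ∈ Finset.univ.filter (· < k), g j = ∑ j ∈ Finset.range k.1, g' j := by
  calc ∑ j ∈ Finset.univ.filter (· < k), g j
      = ∑ j ∈ Finset.univ.filter (· < k), g' j.1 :=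
        Finset.sum_congr rfl fun j _ => hg j
    _ = ∑ a : Fin K, (if a < k then g' a.1 else 0) := Finset.sum_filter _ _
    _ = ∑ j ∈ Finset.range K, (if j < k.1 then g' j else 0) := by
        rw [← Fin.sum_univ_eq_sum_range (fun j => if j < k.1 then g' j else 0) K]
        refine Finset.sum_congr rfl fun a _ => ?_
        by_cases hak : a < k
        · rw [if_pos hak]; exact (if_pos hak).symm
        · rw [if_neg hak]; exact (if_neg (fun hc => hak (Fin.lt_def.2 hc))).symm
    _ = ∑ j ∈ Finset.range k.1, g' j := aux_range_ite k.2.le g'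

/-- Exact optimality of the greedy power allocation: with channel gains sorted
in decreasing order, the supremum of the weighted sum rate over all feasible
power splits equals `∫_0^P max_k θ_k/(1/h_k + z) dz`. -/
theorem stmt6 (K : ℕ) (hK : 1 ≤ K) (P : ℝ) (hP : 0 < P)
    (h θ : Fin K → ℝ) (hh : ∀ k, 0 < h k)
    (hmono : ∀ j k : Fin K, j ≤ k → h k ≤ h j)
    (hθ : ∀ k, 0 ≤ θ k) :
    sSup ((fun p : Fin K → ℝ =>
        ∑ k, θ k *
          Real.log ((1 + h k * ∑ j ∈ Finset.univ.filter (· ≤ k), p j) /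
            (1 + h k * ∑ j ∈ Finset.univ.filter (· < k), p j))) ''
        {p | (∀ k, 0 ≤ p k) ∧ ∑ k, p k ≤ P})
      = ∫ z in (0 : ℝ)..P,
          Finset.univ.sup' (Finset.univ_nonempty_iff.mpr ⟨⟨0, hK⟩⟩)
            (fun k => θ k / (1 / h k + z)) := by
  set M : ℝ → ℝ := fun z => Finset.univ.sup'
      (Finset.univ_nonempty_iff.mpr ⟨⟨0, hK⟩⟩)
      (fun k => θ k / (1 / h k + z)) with hMdef
  -- basic positivity facts
  have hc : ∀ k : Fin K, 0 < 1 / h k := fun k => one_div_pos.2 (hh k)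
  have hden : ∀ (k : Fin K) (z : ℝ), 0 ≤ z → 0 < 1 / h k + z :=
    fun k z hz => by have := hc k; linarith
  have hunn : ∀ (k : Fin K) (z : ℝ), 0 ≤ z → 0 ≤ θ k / (1 / h k + z) :=
    fun k z hz => div_nonneg (hθ k) (hden k z hz).le
  have hcross : ∀ (i j : Fin K), i ≤ j → ∀ w z : ℝ, 0 ≤ w → w ≤ z →
      θ i / (1 / h i + w) < θ j / (1 / h j + w) →
      θ i / (1 / h i + z) < θ j / (1 / h j + z) :=
    fun i j hij w z hw hwz hlt =>
      aux_cross _ _ _ _ _ _ (hθ i) (hc i) (hc j)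
        (one_div_le_one_div_of_le (hh j) (hmono i j hij)) hw hwz hlt
  have hukM : ∀ (k : Fin K) (z : ℝ), θ k / (1 / h k + z) ≤ M z :=
    fun k z => Finset.le_sup' (fun k => θ k / (1 / h k + z)) (Finset.mem_univ k)
  have hMnn : ∀ z : ℝ, 0 ≤ z → 0 ≤ M z :=
    fun z hz => le_trans (hunn ⟨0, hK⟩ z hz) (hukM ⟨0, hK⟩ z)
  -- antitonicity and integrability
  have huanti : ∀ k : Fin K, AntitoneOn (fun z => θ k / (1 / h k + z)) (Set.Ici 0) := by
    intro k x hx y hy hxy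
    have h1 : 0 < 1 / h k + x := hden k x hx
    have h2 : (1:ℝ) / h k + x ≤ 1 / h k + y := by linarith
    have h3 : 0 ≤ θ k := hθ k
    show θ k / (1 / h k + y) ≤ θ k / (1 / h k + x)
    gcongr
  have hManti : AntitoneOn M (Set.Ici 0) := by
    intro x hx y hy hxy
    refine Finset.sup'_le _ _ fun k _ => ?_
    exact le_trans (huanti k hx hy hxy) (hukM k x)
  have hsubIci : ∀ a b : ℝ, 0 ≤ a → 0 ≤ b → Set.uIcc a b ⊆ Set.Ici 0 :=
    fun a b ha hb x hx => le_trans (le_min ha hb) hx.1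
  have hMint : ∀ a b : ℝ, 0 ≤ a → 0 ≤ b → IntervalIntegrable M MeasureTheory.volume a b :=
    fun a b ha hb => (hManti.mono (hsubIci a b ha hb)).intervalIntegrable
  have huint : ∀ (k : Fin K) (a b : ℝ), 0 ≤ a → 0 ≤ b →
      IntervalIntegrable (fun z => θ k / (1 / h k + z)) MeasureTheory.volume a b :=
    fun k a b ha hb => ((huanti k).mono (hsubIci a b ha hb)).intervalIntegrable
  -- log-ratio identity
  have harg : ∀ (k : Fin K) (a b : ℝ), 0 ≤ a → 0 ≤ b →
      (1 / h k + b) / (1 / h k + a) = (1 + h k * b) / (1 + h k * a) := by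
    intro k a b ha hb
    have hk0 := hh k
    have h1 : (0:ℝ) < 1 / h k + a := hden k a ha
    have h2 : (0:ℝ) < 1 + h k * a := by positivity
    rw [div_eq_div_iff h1.ne' h2.ne']
    field_simp
  -- ===== Upper bound =====
  have hub : ∀ y ∈ ((fun p : Fin K → ℝ =>
        ∑ k, θ k *
          Real.log ((1 + h k * ∑ j ∈ Finset.univ.filter (· ≤ k), p j) /
            (1 + h k * ∑ j ∈ Finset.univ.filter (· < k), p j))) ''
        {p | (∀ k, 0 ≤ p k) ∧ ∑ k, p k ≤ P}), y ≤ ∫ z in (0:ℝ)..P, M z := by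
    rintro y ⟨p, ⟨hp0, hpsum⟩, rfl⟩
    set q : ℕ → ℝ := fun j => if hj : j < K then p ⟨j, hj⟩ else 0 with hqdef
    set s : ℕ → ℝ := fun m => ∑ j ∈ Finset.range m, q j with hsdef
    have hsapp : ∀ m, s m = ∑ j ∈ Finset.range m, q j := fun m => rfl
    have hq0 : ∀ j, 0 ≤ q j := by
      intro j; by_cases hj : j < K
      · simp only [hqdef, dif_pos hj]; exact hp0 _
      · simp only [hqdef, dif_neg hj]; exact le_refl 0
    have hsmono : ∀ a b : ℕ, a ≤ b → s a ≤ s b := fun a b hab =>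
      Finset.sum_le_sum_of_subset_of_nonneg (Finset.range_subset_range.2 hab)
        (fun i _ _ => hq0 i)
    have hs00 : s 0 = 0 := Finset.sum_range_zero q
    have hs0 : ∀ m, 0 ≤ s m := fun m => by
      have := hsmono 0 m (Nat.zero_le m); linarith
    have hqp : ∀ j : Fin K, q j.1 = p j := fun j => dif_pos j.2
    have hsK : s K = ∑ k, p k := by
      rw [hsapp, ← Fin.sum_univ_eq_sum_range q K]
      exact Finset.sum_congr rfl fun k _ => hqp k
    have hsP : ∀ m, m ≤ K → s m ≤ P := fun m hm =>
      le_trans (hsmono m K hm) (hsK ▸ hpsum)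
    have hle : ∀ k : Fin K, ∑ j ∈ Finset.univ.filter (· ≤ k), p j = s (k.1+1) := by
      intro k
      rw [hsapp]
      exact aux_filter_le k p q (fun j => (hqp j).symm)
    have hlt : ∀ k : Fin K, ∑ j ∈ Finset.univ.filter (· < k), p j = s k.1 := by
      intro k
      rw [hsapp]
      exact aux_filter_lt k p q (fun j => (hqp j).symm)
    have hterm : ∀ k : Fin K,
        θ k * Real.log ((1 + h k * ∑ j ∈ Finset.univ.filter (· ≤ k), p j) /
            (1 + h k * ∑ j ∈ Finset.univ.filter (· < k), p j))
          ≤ ∫ z in (s k.1)..(s (k.1+1)), M z := by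
      intro k
      rw [hle k, hlt k]
      have e1 : θ k * Real.log ((1 + h k * s (k.1+1)) / (1 + h k * s k.1))
          = ∫ z in (s k.1)..(s (k.1+1)), θ k / (1 / h k + z) := by
        rw [aux_int (θ k) (1 / h k) _ _ (hc k) (hs0 _) (hsmono _ _ (Nat.le_succ _)),
          harg k _ _ (hs0 _) (hs0 _)]
      rw [e1]
      exact intervalIntegral.integral_mono_on (hsmono _ _ (Nat.le_succ _))
        (huint k _ _ (hs0 _) (hs0 _)) (hMint _ _ (hs0 _) (hs0 _))
        (fun x _ => hukM k x)
    calc ∑ k, θ k * Real.log ((1 + h k * ∑ j ∈ Finset.univ.filter (· ≤ k), p j) /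
            (1 + h k * ∑ j ∈ Finset.univ.filter (· < k), p j))
        ≤ ∑ k : Fin K, ∫ z in (s k.1)..(s (k.1+1)), M z :=
          Finset.sum_le_sum fun k _ => hterm k
      _ = ∑ i ∈ Finset.range K, ∫ z in (s i)..(s (i+1)), M z :=
          Fin.sum_univ_eq_sum_range (fun i => ∫ z in (s i)..(s (i+1)), M z) K
      _ = ∫ z in (s 0)..(s K), M z :=
          intervalIntegral.sum_integral_adjacent_intervals
            (fun i _ => hMint _ _ (hs0 _) (hs0 _))
      _ = ∫ z in (0:ℝ)..(s K), M z := by rw [hs00]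
      _ ≤ ∫ z in (0:ℝ)..P, M z := by
          rw [← intervalIntegral.integral_add_adjacent_intervals
            (hMint 0 (s K) le_rfl (hs0 K)) (hMint (s K) P (hs0 K) hP.le)]
          have : 0 ≤ ∫ z in (s K)..P, M z :=
            intervalIntegral.integral_nonneg (hsP K le_rfl)
              (fun x hx => hMnn x (le_trans (hs0 K) hx.1))
          linarith
  -- ===== Breakpoints =====
  set S : ℕ → Set ℝ := fun k => {z | z ∈ Set.Icc 0 P ∧ ∃ j : Fin K, k ≤ j.1 ∧
      ∀ i : Fin K, i.1 < k → θ i / (1 / h i + z) < θ j / (1 / h j + z)} with hSdef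
  set t : ℕ → ℝ := fun k => sInf (insert P (S k)) with htdef
  have htapp : ∀ k, t k = sInf (insert P (S k)) := fun _ => rfl
  have htne : ∀ k : ℕ, (insert P (S k)).Nonempty := fun k => ⟨P, Set.mem_insert _ _⟩
  have htbdd : ∀ k : ℕ, BddBelow (insert P (S k)) := by
    intro k
    refine ⟨0, fun x hx => ?_⟩
    rcases hx with rfl | hx
    · exact hP.le
    · exact hx.1.1
  have ht0 : ∀ k, 0 ≤ t k := fun k => le_csInf (htne k) fun x hx => by
    rcases hx with rfl | hx
    · exact hP.le
    · exact hx.1.1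
  have htP : ∀ k, t k ≤ P := fun k => csInf_le (htbdd k) (Set.mem_insert _ _)
  have htmono : ∀ k, t k ≤ t (k+1) := by
    intro k
    refine csInf_le_csInf (htbdd k) (htne (k+1)) (Set.insert_subset_insert ?_)
    rintro z ⟨hz, j, hj, hlt⟩
    exact ⟨hz, j, by omega, fun i hi => hlt i (by omega)⟩
  have ht00 : t 0 = 0 := by
    refine le_antisymm (csInf_le (htbdd 0) (Or.inr ?_)) (ht0 0)
    exact ⟨⟨le_refl 0, hP.le⟩, ⟨0, hK⟩, Nat.zero_le _,
      fun i hi => absurd hi (Nat.not_lt_zero _)⟩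
  have htKP : t K = P := by
    have hSK : S K = ∅ := by
      ext z
      simp only [hSdef, Set.mem_setOf_eq, Set.mem_empty_iff_false, iff_false]
      rintro ⟨_, j, hj, _⟩
      exact absurd j.2 (not_lt.2 hj)
    have he : insert P (∅ : Set ℝ) = {P} := by simp
    rw [htapp, hSK, he, csInf_singleton]
  -- key: on (t k, t (k+1)) the k-th utility is the pointwise max
  have hkey : ∀ (k : ℕ) (hk : k < K), ∀ z ∈ Set.Ioo (t k) (t (k+1)),
      ∀ m : Fin K, θ m / (1 / h m + z) ≤ θ ⟨k, hk⟩ / (1 / h ⟨k, hk⟩ + z) := by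
    intro k hk z hz
    have hz0 : 0 ≤ z := le_trans (ht0 k) hz.1.le
    have hzP : z ≤ P := le_trans hz.2.le (htP (k+1))
    have hzIcc : z ∈ Set.Icc (0:ℝ) P := ⟨hz0, hzP⟩
    -- z ∈ S k
    have hz1 : sInf (insert P (S k)) < z := hz.1
    obtain ⟨w, hw, hwz⟩ := exists_lt_of_csInf_lt (htne k) hz1
    have hwS : w ∈ S k := by
      rcases hw with rfl | hw
      · exact absurd (lt_of_lt_of_le (lt_trans hwz hz.2) (htP (k+1))) (lt_irrefl _)
      · exact hw
    obtain ⟨hwIcc, j, hjk, hjlt⟩ := hwS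
    have hjltz : ∀ i : Fin K, i.1 < k →
        θ i / (1 / h i + z) < θ j / (1 / h j + z) := by
      intro i hi
      exact hcross i j (Fin.le_def.2 (le_trans (le_of_lt hi) hjk)) w z
        hwIcc.1 hwz.le (hjlt i hi)
    -- z ∉ S (k+1)
    have hznS : z ∉ S (k+1) := fun hmem =>
      absurd (csInf_le (htbdd (k+1)) (Set.mem_insert_of_mem _ hmem)) (not_le.2 hz.2)
    have hnS : ∀ m : Fin K, k+1 ≤ m.1 → ∃ i : Fin K, i.1 ≤ k ∧
        θ m / (1 / h m + z) ≤ θ i / (1 / h i + z) := by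
      intro m hm
      by_contra hcon
      push_neg at hcon
      exact hznS ⟨hzIcc, m, hm, fun i hi => hcon i (by omega)⟩
    have hstep : ∀ i : Fin K, i.1 < k →
        θ i / (1 / h i + z) < θ (⟨k, hk⟩ : Fin K) / (1 / h ⟨k, hk⟩ + z) := by
      by_cases hjeq : j.1 = k
      · have hjκ : j = (⟨k, hk⟩ : Fin K) := Fin.ext hjeq
        intro i hi
        rw [← hjκ]; exact hjltz i hi
      · obtain ⟨i, hik, hmi⟩ := hnS j (by omega)
        have hik' : i.1 = k := by
          by_contra hne'
          exact absurd (lt_of_lt_of_le (hjltz i (lt_of_le_of_ne hik hne')) hmi)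
            (lt_irrefl _)
        have hiκ : i = (⟨k, hk⟩ : Fin K) := Fin.ext hik'
        intro i' hi'
        rw [← hiκ]; exact lt_of_lt_of_le (hjltz i' hi') hmi
    intro m
    rcases lt_trichotomy m.1 k with hm | hm | hm
    · exact (hstep m hm).le
    · have hmκ : m = (⟨k, hk⟩ : Fin K) := Fin.ext hm
      rw [hmκ]
    · obtain ⟨i, hik, hmi⟩ := hnS m (by omega)
      rcases lt_or_eq_of_le hik with hik2 | hik2
      · exact le_trans hmi (hstep i hik2).le
      · have hiκ : i = (⟨k, hk⟩ : Fin K) := Fin.ext hik2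
        rw [← hiκ]; exact hmi
  -- greedy allocation
  set pg : Fin K → ℝ := fun k => t (k.1+1) - t k.1 with hpgdef
  have hpg0 : ∀ k, 0 ≤ pg k := fun k => sub_nonneg.2 (htmono k.1)
  have hpgsum : ∑ k, pg k = P := by
    have e : ∑ k : Fin K, pg k = ∑ i ∈ Finset.range K, (t (i+1) - t i) :=
      Fin.sum_univ_eq_sum_range (fun i => t (i+1) - t i) K
    rw [e, Finset.sum_range_sub t K, ht00, htKP, sub_zero]
  have hpgle : ∀ k : Fin K, ∑ j ∈ Finset.univ.filter (· ≤ k), pg j = t (k.1+1) := by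
    intro k
    rw [aux_filter_le k pg (fun i => t (i+1) - t i) (fun j => rfl),
      Finset.sum_range_sub t (k.1+1), ht00, sub_zero]
  have hpglt : ∀ k : Fin K, ∑ j ∈ Finset.univ.filter (· < k), pg j = t k.1 := by
    intro k
    rw [aux_filter_lt k pg (fun i => t (i+1) - t i) (fun j => rfl),
      Finset.sum_range_sub t k.1, ht00, sub_zero]
  -- value of the greedy allocation equals the integral
  set F : ℕ → ℝ := fun i => if hi : i < K then
      θ (⟨i, hi⟩ : Fin K) * Real.log ((1 + h ⟨i, hi⟩ * t (i+1)) / (1 + h ⟨i, hi⟩ * t i))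
    else 0 with hFdef
  have hFapp : ∀ (i : ℕ) (hi : i < K), F i =
      θ (⟨i, hi⟩ : Fin K) * Real.log ((1 + h ⟨i, hi⟩ * t (i+1)) / (1 + h ⟨i, hi⟩ * t i)) :=
    fun i hi => dif_pos hi
  have hpiece : ∀ i ∈ Finset.range K, (∫ z in (t i)..(t (i+1)), M z) = F i := by
    intro i hi
    have hiK : i < K := Finset.mem_range.1 hi
    rw [hFapp i hiK]
    have hsing : ∀ᵐ x : ℝ ∂MeasureTheory.volume, x ∉ ({t (i+1)} : Set ℝ) :=
      MeasureTheory.measure_eq_zero_iff_ae_notMem.mp Real.volume_singleton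
    have hae : ∀ᵐ x : ℝ ∂MeasureTheory.volume, x ∈ Set.uIoc (t i) (t (i+1)) →
        M x = θ (⟨i, hiK⟩ : Fin K) / (1 / h ⟨i, hiK⟩ + x) := by
      filter_upwards [hsing] with x hx hxI
      rw [Set.uIoc_of_le (htmono i)] at hxI
      have hxoo : x ∈ Set.Ioo (t i) (t (i+1)) :=
        ⟨hxI.1, lt_of_le_of_ne hxI.2 (by simpa using hx)⟩
      exact le_antisymm
        (Finset.sup'_le _ _ fun m _ => hkey i hiK x hxoo m)
        (Finset.le_sup' (fun k => θ k / (1 / h k + x)) (Finset.mem_univ (⟨i, hiK⟩ : Fin K)))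
    rw [intervalIntegral.integral_congr_ae hae,
      aux_int (θ ⟨i, hiK⟩) (1 / h ⟨i, hiK⟩) _ _ (hc _) (ht0 i) (htmono i),
      harg _ _ _ (ht0 i) (ht0 (i+1))]
  have hval : (∑ k, θ k *
        Real.log ((1 + h k * ∑ j ∈ Finset.univ.filter (· ≤ k), pg j) /
          (1 + h k * ∑ j ∈ Finset.univ.filter (· < k), pg j)))
      = ∫ z in (0:ℝ)..P, M z := by
    have h1 : ∀ k : Fin K, θ k *
        Real.log ((1 + h k * ∑ j ∈ Finset.univ.filter (· ≤ k), pg j) /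
          (1 + h k * ∑ j ∈ Finset.univ.filter (· < k), pg j)) = F k.1 := by
      intro k
      rw [hpgle k, hpglt k, hFapp k.1 k.2]
    calc (∑ k, θ k *
        Real.log ((1 + h k * ∑ j ∈ Finset.univ.filter (· ≤ k), pg j) /
          (1 + h k * ∑ j ∈ Finset.univ.filter (· < k), pg j)))
        = ∑ k : Fin K, F k.1 := Finset.sum_congr rfl fun k _ => h1 k
      _ = ∑ i ∈ Finset.range K, F i := Fin.sum_univ_eq_sum_range F K
      _ = ∑ i ∈ Finset.range K, ∫ z in (t i)..(t (i+1)), M z :=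
          (Finset.sum_congr rfl hpiece).symm
      _ = ∫ z in (t 0)..(t K), M z :=
          intervalIntegral.sum_integral_adjacent_intervals
            (fun i _ => hMint _ _ (ht0 _) (ht0 _))
      _ = ∫ z in (0:ℝ)..P, M z := by rw [ht00, htKP]
  have hmem : (∫ z in (0:ℝ)..P, M z) ∈ ((fun p : Fin K → ℝ =>
        ∑ k, θ k *
          Real.log ((1 + h k * ∑ j ∈ Finset.univ.filter (· ≤ k), p j) /
            (1 + h k * ∑ j ∈ Finset.univ.filter (· < k), p j))) ''
        {p | (∀ k, 0 ≤ p k) ∧ ∑ k, p k ≤ P}) :=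
    ⟨pg, ⟨hpg0, hpgsum.le⟩, hval⟩
  exact le_antisymm
    (csSup_le ⟨_, hmem⟩ hub)
    (le_csSup ⟨_, hub⟩ hmem)
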